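/- Let N be an odd perfect number written in Euler form N = p^α · q_1^{2β_1} · … · q_{r-1}^{2β_{r-1}}, let ℓ be a prime and k a positive integer such that ℓ^k divides 2β_i + 1 for every i = 1, …, r−1 but ℓ^{5k} does not divide N. Let S be the set of prime factors q_i of N (i = 1, …, r−1) with q_i ≡ 1 (mod ℓ). Then 1 ≤ #S ≤ 4. -/

import Mathlib

open Finset

/-- geometric sum -/
private def geo (x n : ℕ) : ℕ := ∑ j ∈ Finset.range n, x ^ j

private lemma geo_succ (x n : ℕ) : geo x (n+1) = geo x n + x ^ n :=
  Finset.sum_range_succ _ _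

private lemma geo_succ' (x n : ℕ) : geo x (n+1) = 1 + x * geo x n := by
  unfold geo
  rw [Finset.sum_range_succ']
  simp [pow_succ, Finset.mul_sum, add_comm, mul_comm]

private lemma geo_one_le {x n : ℕ} (hn : 1 ≤ n) : 1 ≤ geo x n := by
  have : x ^ 0 ≤ geo x n :=
    Finset.single_le_sum (f := fun j => x ^ j) (fun i _ => Nat.zero_le _)
      (Finset.mem_range.mpr hn)
  simpa using this

private lemma geo_ne_zero {x n : ℕ} (hn : 1 ≤ n) : geo x n ≠ 0 :=
  Nat.one_le_iff_ne_zero.mp (geo_one_le hn)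

private lemma pow_le_geo {x n : ℕ} (hn : 1 ≤ n) : x ^ (n-1) ≤ geo x n :=
  Finset.single_le_sum (f := fun j => x ^ j) (fun i _ => Nat.zero_le _)
    (Finset.mem_range.mpr (by omega))

private lemma geo_mul_pred {x : ℕ} (hx : 1 ≤ x) (n : ℕ) : geo x n * (x - 1) + 1 = x ^ n := by
  induction n with
  | zero => simp [geo]
  | succ n ih =>
    rw [geo_succ, Nat.add_mul]
    have h1 : x ^ n * (x - 1) = x ^ (n+1) - x ^ n := by
      rw [Nat.mul_sub, mul_one, pow_succ, mul_comm]
    have h2 : x ^ n ≤ x ^ (n+1) := Nat.pow_le_pow_right (by omega) (by omega)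
    have h3 : 1 ≤ x ^ n := Nat.one_le_pow _ _ (by omega)
    omega

private lemma geo_dvd_pow_sub_one {x : ℕ} (hx : 1 ≤ x) (n : ℕ) : geo x n ∣ x ^ n - 1 :=
  ⟨x - 1, by have := geo_mul_pred hx n; omega⟩

private lemma geo_lt_pow {x : ℕ} (hx : 2 ≤ x) {n : ℕ} (hn : 1 ≤ n) : geo x n < x ^ n := by
  have h := geo_mul_pred (by omega : 1 ≤ x) n
  have h2 : geo x n * 1 ≤ geo x n * (x - 1) := Nat.mul_le_mul_left _ (by omega)
  omega

private lemma geo_factor (x a b : ℕ) : geo x (a * b) = geo x a * geo (x ^ a) b := by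
  induction b with
  | zero => simp [geo]
  | succ b ih =>
    rw [Nat.mul_succ]
    unfold geo at *
    rw [Finset.sum_range_add, ih, Finset.sum_range_succ, Nat.mul_add]
    congr 1
    rw [Finset.sum_mul]
    apply Finset.sum_congr rfl
    intro i _
    rw [← pow_mul, ← pow_add]
    ring_nf

private lemma geo_cast (m x n : ℕ) :
    ((geo x n : ℕ) : ZMod m) = ∑ j ∈ Finset.range n, (x : ZMod m) ^ j := by
  unfold geo
  push_cast
  rfl

private lemma geo_modeq_len {m x n : ℕ} (h : x ≡ 1 [MOD m]) : geo x n ≡ n [MOD m] := by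
  have hx : (x : ZMod m) = 1 := by
    have := (ZMod.natCast_eq_natCast_iff x 1 m).mpr h
    simpa using this
  have : ((geo x n : ℕ) : ZMod m) = (n : ZMod m) := by
    rw [geo_cast, hx]
    simp
  exact (ZMod.natCast_eq_natCast_iff _ _ _).mp this

private lemma geo_odd {x n : ℕ} (hx : Odd x) (hn : Odd n) : Odd (geo x n) := by
  have h1 : x ≡ 1 [MOD 2] := by
    have := Nat.odd_iff.mp hx
    unfold Nat.ModEq; omega
  have h2 := geo_modeq_len (n := n) h1
  unfold Nat.ModEq at h2
  have := Nat.odd_iff.mp hn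
  rw [Nat.odd_iff]
  omega

private lemma geo_dvd_geo (x : ℕ) {a b : ℕ} (h : a ∣ b) : geo x a ∣ geo x b := by
  obtain ⟨c, rfl⟩ := h
  rw [geo_factor]
  exact Dvd.intro _ rfl

/-- divisibility for the upper bound -/
private lemma geo_pow_dvd {ℓ x : ℕ} (hx : x ≡ 1 [MOD ℓ]) :
    ∀ (k : ℕ) {n : ℕ}, ℓ ^ k ∣ n → ℓ ^ k ∣ geo x n := by
  intro k
  induction k generalizing x with
  | zero => simp
  | succ k ih =>
    intro n hn
    obtain ⟨m, rfl⟩ := hn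
    have hxl : x ^ ℓ ≡ 1 [MOD ℓ] := by simpa using hx.pow ℓ
    have h2 : ℓ ∣ geo x ℓ := by
      have h := (geo_modeq_len (n := ℓ) hx).trans (Nat.modEq_zero_iff_dvd.mpr dvd_rfl)
      exact Nat.modEq_zero_iff_dvd.mp h
    have h3 : ℓ ^ k ∣ geo (x ^ ℓ) (ℓ ^ k * m) := ih hxl ⟨m, rfl⟩
    have h4 : ℓ ^ (k+1) * m = ℓ * (ℓ ^ k * m) := by ring
    rw [h4, geo_factor, pow_succ']
    exact Nat.mul_dvd_mul h2 h3
private lemma val_le_of_dvd {t a b : ℕ} [Fact t.Prime] (h : a ∣ b) (hb : b ≠ 0) :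
    padicValNat t a ≤ padicValNat t b := by
  rcases Nat.eq_zero_or_pos a with h0 | h0
  · exact absurd (Nat.eq_zero_of_zero_dvd (h0 ▸ h)) hb
  · exact (padicValNat_dvd_iff_le hb).mp (dvd_trans pow_padicValNat_dvd h)

/-- Lifting the exponent wrapper for geometric sums. -/
private lemma geo_val {t x n : ℕ} (ht : t.Prime) (htodd : Odd t) (hx : 2 ≤ x)
    (hdvd : t ∣ x - 1) (hn : n ≠ 0) :
    padicValNat t (geo x n) = padicValNat t n := by
  haveI : Fact t.Prime := ⟨ht⟩
  have hx1 : 1 < x := hx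
  have htx : ¬ t ∣ x := fun hc => by
    have h1 : t ∣ x - (x - 1) := Nat.dvd_sub hc hdvd
    have h2 : x - (x - 1) = 1 := by omega
    have := Nat.le_of_dvd (by omega) (h2 ▸ h1)
    have := ht.two_le
    omega
  have key : padicValNat t (x ^ n - 1 ^ n) = padicValNat t (x - 1) + padicValNat t n :=
    padicValNat.pow_sub_pow htodd hx1 hdvd htx hn
  have hgeo : geo x n * (x - 1) = x ^ n - 1 := by
    have := geo_mul_pred (by omega : 1 ≤ x) n; omega
  have hg0 : geo x n ≠ 0 := Nat.one_le_iff_ne_zero.mp (geo_one_le (by omega))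
  have hx0 : x - 1 ≠ 0 := by omega
  have : padicValNat t (geo x n) + padicValNat t (x - 1)
      = padicValNat t (x - 1) + padicValNat t n := by
    rw [← padicValNat.mul hg0 hx0, hgeo, ← key]; norm_num
  omega

/-- a number with all prime factors among {ℓ, p} divides ℓ^vℓ * p^vp -/
private lemma dvd_pp2 {B ℓ p : ℕ} (hB : B ≠ 0) (hl : ℓ.Prime) (hp : p.Prime)
    (h : ∀ t, t.Prime → t ∣ B → t = ℓ ∨ t = p) :
    B ∣ ℓ ^ (padicValNat ℓ B) * p ^ (padicValNat p B) := by
  haveI := Fact.mk hl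
  haveI := Fact.mk hp
  rw [← Nat.factorization_le_iff_dvd hB (Nat.mul_ne_zero (pow_ne_zero _ hl.ne_zero) (pow_ne_zero _ hp.ne_zero))]
  intro t
  rcases Nat.eq_zero_or_pos (B.factorization t) with h0 | h0
  · simp [h0]
  · have ht : t.Prime := by
      by_contra hnp
      rw [Nat.factorization_eq_zero_of_not_prime B hnp] at h0
      omega
    have htB : t ∣ B := Nat.dvd_of_factorization_pos (by omega)
    have hfac : (ℓ ^ padicValNat ℓ B * p ^ padicValNat p B).factorization
        = (Finsupp.single ℓ (padicValNat ℓ B)) + (Finsupp.single p (padicValNat p B)) := by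
      rw [Nat.factorization_mul (pow_ne_zero _ hl.ne_zero) (pow_ne_zero _ hp.ne_zero),
        Nat.Prime.factorization_pow hl, Nat.Prime.factorization_pow hp]
    rcases h t ht htB with rfl | rfl <;>
    · rw [hfac, Nat.factorization_def B ht]
      simp only [Finsupp.add_apply, Finsupp.single_apply]
      split_ifs <;> omega

private lemma eq_pp1 {B p : ℕ} (hB : B ≠ 0) (hp : p.Prime)
    (h : ∀ t, t.Prime → t ∣ B → t = p) : B = p ^ (padicValNat p B) := by
  haveI := Fact.mk hp
  refine Nat.dvd_antisymm ?_ pow_padicValNat_dvd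
  rw [← Nat.factorization_le_iff_dvd hB (pow_ne_zero _ hp.ne_zero)]
  intro t
  rcases Nat.eq_zero_or_pos (B.factorization t) with h0 | h0
  · simp [h0]
  · have ht : t.Prime := by
      by_contra hnp
      rw [Nat.factorization_eq_zero_of_not_prime B hnp] at h0
      omega
    have htB : t ∣ B := Nat.dvd_of_factorization_pos (by omega)
    rcases h t ht htB with rfl
    rw [Nat.Prime.factorization_pow hp, Nat.factorization_def B ht]
    simp only [Finsupp.single_apply]
    split_ifs <;> omega

private lemma ineq_2n (n : ℕ) (hn : 3 ≤ n) : 2 * n + 1 ≤ 3 ^ (n - 1) := by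
  obtain ⟨m, rfl⟩ : ∃ m, n = m + 3 := ⟨n - 3, by omega⟩
  induction m with
  | zero => norm_num
  | succ m ih =>
    have h1 := ih (by omega)
    have h3 : (3:ℕ) ^ (m + 1 + 3 - 1) = 3 * 3 ^ (m + 3 - 1) := by
      rw [show m + 1 + 3 - 1 = (m + 3 - 1) + 1 by omega, pow_succ]; ring
    omega

private lemma ineq_lr {ℓ r : ℕ} (hl : 3 ≤ ℓ) (hr : 3 ≤ r) :
    ℓ * r < 3 ^ ((ℓ - 1) * (r - 1) - 1) := by
  have h1 : 2 * ℓ + 1 ≤ 3 ^ (ℓ - 1) := ineq_2n ℓ hl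
  have h2 : 2 * r + 1 ≤ 3 ^ (r - 1) := ineq_2n r hr
  have h3 : ℓ + r - 3 ≤ (ℓ - 1) * (r - 1) - 1 := by
    obtain ⟨a, rfl⟩ : ∃ a, ℓ = a + 3 := ⟨ℓ - 3, by omega⟩
    obtain ⟨b, rfl⟩ : ∃ b, r = b + 3 := ⟨r - 3, by omega⟩
    have e1 : a + 3 - 1 = a + 2 := by omega
    have e2 : b + 3 - 1 = b + 2 := by omega
    rw [e1, e2]
    have hx : (a + 2) * (b + 2) = a * b + 2 * a + 2 * b + 4 := by ring
    rw [hx]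
    have := Nat.zero_le (a * b)
    omega
  have h6 : 3 ^ (ℓ + r - 3) ≤ 3 ^ ((ℓ - 1) * (r - 1) - 1) := Nat.pow_le_pow_right (by norm_num) h3
  have h7 : 3 * 3 ^ (ℓ + r - 3) = 3 ^ (ℓ - 1) * 3 ^ (r - 1) := by
    rw [← pow_add, ← pow_succ']
    congr 1
    omega
  have h8 : (2 * ℓ + 1) * (2 * r + 1) ≤ 3 ^ (ℓ - 1) * 3 ^ (r - 1) :=
    Nat.mul_le_mul h1 h2
  have h9 : (2 * ℓ + 1) * (2 * r + 1) = 4 * (ℓ * r) + 2 * ℓ + 2 * r + 1 := by ring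
  clear h1 h2 h3
  generalize hC : 3 ^ ((ℓ - 1) * (r - 1) - 1) = C at h6 ⊢
  generalize hB : 3 ^ (ℓ + r - 3) = B at h6 h7
  generalize hY : 3 ^ (ℓ - 1) * 3 ^ (r - 1) = Y at h7 h8
  generalize hZ : (2 * ℓ + 1) * (2 * r + 1) = Z at h8 h9
  generalize hA : ℓ * r = A at h9 ⊢
  omega

private lemma ineq_a5 (α : ℕ) (hα : 1 ≤ α) : (α + 1) ^ 5 ≤ 5 ^ (3 * α) := by
  induction α with
  | zero => omega
  | succ a ih =>
    rcases Nat.eq_zero_or_pos a with rfl | ha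
    · norm_num
    have h1 := ih ha
    have h2 : (a + 1 + 1) ^ 5 ≤ 2 ^ 5 * (a + 1) ^ 5 := by
      rw [← mul_pow]
      exact Nat.pow_le_pow_left (by omega) 5
    have h3 : (5:ℕ) ^ (3 * (a + 1)) = 125 * 5 ^ (3 * a) := by
      rw [show 3 * (a+1) = 3 * a + 3 by ring, pow_add]; ring
    calc (a + 1 + 1) ^ 5 ≤ 2 ^ 5 * (a + 1) ^ 5 := h2
      _ = 32 * (a + 1) ^ 5 := by norm_num
      _ ≤ 32 * 5 ^ (3 * a) := Nat.mul_le_mul_left 32 h1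
      _ ≤ 125 * 5 ^ (3 * a) := Nat.mul_le_mul_right _ (by norm_num)
      _ = 5 ^ (3 * (a + 1)) := h3.symm

private lemma ineq_final {α ℓ : ℕ} (hα : 1 ≤ α) (hl : 5 ≤ ℓ) :
    (α + 1) ^ ℓ ≤ 5 ^ (α * (ℓ - 2)) := by
  have key : ((α + 1) ^ ℓ) ^ 5 ≤ (5 ^ (α * (ℓ - 2))) ^ 5 := by
    rw [← pow_mul, ← pow_mul]
    have h1 : (α + 1) ^ (ℓ * 5) = ((α + 1) ^ 5) ^ ℓ := by rw [← pow_mul]; ring_nf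
    rw [h1]
    calc ((α + 1) ^ 5) ^ ℓ ≤ (5 ^ (3 * α)) ^ ℓ := Nat.pow_le_pow_left (ineq_a5 α hα) ℓ
      _ = 5 ^ (3 * α * ℓ) := by rw [← pow_mul]
      _ ≤ 5 ^ (α * (ℓ - 2) * 5) := by
          apply Nat.pow_le_pow_right (by norm_num)
          have h2 : 3 * ℓ ≤ 5 * (ℓ - 2) := by omega
          calc 3 * α * ℓ = α * (3 * ℓ) := by ring
            _ ≤ α * (5 * (ℓ - 2)) := Nat.mul_le_mul_left α h2
            _ = α * (ℓ - 2) * 5 := by ring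
  exact (Nat.pow_le_pow_iff_left (by norm_num)).mp key

private lemma prod_coprime_dvd {ι : Type*} {s : Finset ι} {f : ι → ℕ} {n : ℕ}
    (hcop : ∀ i ∈ s, ∀ j ∈ s, i ≠ j → Nat.Coprime (f i) (f j))
    (hdvd : ∀ i ∈ s, f i ∣ n) : (∏ i ∈ s, f i) ∣ n := by
  classical
  induction s using Finset.induction_on with
  | empty => simp
  | @insert a t ha ih =>
    rw [Finset.prod_insert ha]
    refine Nat.Coprime.mul_dvd_of_dvd_of_dvd ?_ (hdvd a (Finset.mem_insert_self a t)) ?_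
    · exact Nat.Coprime.prod_right fun i hi =>
        hcop a (Finset.mem_insert_self a t) i (Finset.mem_insert_of_mem hi)
          (fun h => ha (h ▸ hi))
    · exact ih (fun i hi j hj hij => hcop i (Finset.mem_insert_of_mem hi) j
        (Finset.mem_insert_of_mem hj) hij) (fun i hi => hdvd i (Finset.mem_insert_of_mem hi))

private lemma pow_eq_one_of_dvd_geo {t x n : ℕ} (h : t ∣ geo x n) : (x : ZMod t) ^ n = 1 := by
  have h0 : ((geo x n : ℕ) : ZMod t) = 0 := (ZMod.natCast_eq_zero_iff _ _).mpr h
  rw [geo_cast] at h0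
  have h1 := geom_sum_mul (x : ZMod t) n
  rw [h0, zero_mul] at h1
  have h2 : (x : ZMod t) ^ n - 1 = 0 := h1.symm
  have := sub_eq_zero.mp h2
  simpa using this

private lemma dvd_len_of_dvd_geo {t x n : ℕ} (hx1 : (x : ZMod t) = 1) (h : t ∣ geo x n) :
    t ∣ n := by
  have h0 : ((geo x n : ℕ) : ZMod t) = 0 := (ZMod.natCast_eq_zero_iff _ _).mpr h
  rw [geo_cast, hx1] at h0
  simp only [one_pow, Finset.sum_const, Finset.card_range, nsmul_eq_mul, mul_one] at h0
  exact (ZMod.natCast_eq_zero_iff _ _).mp h0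


private lemma dvd_pow_sub_one_iff {m a n : ℕ} (ha : 1 ≤ a) :
    m ∣ a ^ n - 1 ↔ ((a : ZMod m)) ^ n = 1 := by
  constructor
  · intro h
    have h7 : a ^ n ≡ 1 [MOD m] :=
      ((Nat.modEq_iff_dvd' (Nat.one_le_pow n a (by omega))).mpr h).symm
    have h8 := (ZMod.natCast_eq_natCast_iff _ _ _).mpr h7
    push_cast at h8
    exact h8
  · intro h
    have h6 : ((a ^ n : ℕ) : ZMod m) = ((1 : ℕ) : ZMod m) := by push_cast; rw [h]
    have h7 := (ZMod.natCast_eq_natCast_iff _ _ _).mp h6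
    exact (Nat.modEq_iff_dvd' (Nat.one_le_pow n a (by omega))).mp h7.symm


set_option maxHeartbeats 1000000 in
theorem card_S_between_one_and_four
    (N p α s : ℕ) (q β : Fin s → ℕ)
    (hN : N = p ^ α * ∏ i, q i ^ (2 * β i))
    (hodd : Odd N)
    (hperf : ArithmeticFunction.sigma 1 N = 2 * N)
    (hp : p.Prime) (hpodd : Odd p)
    (hq : ∀ i, (q i).Prime) (hqodd : ∀ i, Odd (q i))
    (hinj : Function.Injective q)
    (hpq : ∀ i, p ≠ q i)
    (hα4 : α % 4 = 1) (hp4 : p % 4 = 1)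
    (hαpos : 0 < α) (hβpos : ∀ i, 0 < β i)
    (ℓ k : ℕ) (hℓ : ℓ.Prime) (hkpos : 0 < k)
    (hdvd : ∀ i, ℓ ^ k ∣ 2 * β i + 1)
    (hnd : ¬ ℓ ^ (5 * k) ∣ N)
    (S : Finset ℕ)
    (hSdef : S = (Finset.univ.filter fun i => q i ≡ 1 [MOD ℓ]).image q) :
    1 ≤ S.card ∧ S.card ≤ 4 := by
  -- σ of prime powers as geometric sums
  have hσpp : ∀ i, ArithmeticFunction.sigma 1 (q i ^ (2 * β i)) = geo (q i) (2 * β i + 1) := by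
    intro i
    rw [ArithmeticFunction.sigma_one_apply_prime_pow (hq i)]
    rfl
  have hσpα : ArithmeticFunction.sigma 1 (p ^ α) = geo p (α + 1) := by
    rw [ArithmeticFunction.sigma_one_apply_prime_pow hp]
    rfl
  -- multiplicativity
  have hcop : Nat.Coprime (p ^ α) (∏ i, q i ^ (2 * β i)) := by
    apply Nat.Coprime.prod_right
    intro i _
    exact Nat.Coprime.pow _ _ ((Nat.coprime_primes hp (hq i)).mpr (hpq i))
  have hmain : geo p (α + 1) * (∏ i, geo (q i) (2 * β i + 1)) = 2 * N := by
    rw [← hperf, hN, ArithmeticFunction.isMultiplicative_sigma.map_mul_of_coprime hcop,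
      ArithmeticFunction.IsMultiplicative.map_prod _ ArithmeticFunction.isMultiplicative_sigma]
    · rw [hσpα]
      congr 1
      exact Finset.prod_congr rfl fun i _ => (hσpp i).symm
    · intro i _ j _ hij
      exact Nat.Coprime.pow _ _ ((Nat.coprime_primes (hq i) (hq j)).mpr
        (fun h => hij (hinj h)))
  have hσidvd : ∀ i, geo (q i) (2 * β i + 1) ∣ 2 * N := by
    intro i
    rw [← hmain]
    exact Dvd.dvd.mul_left (Finset.dvd_prod_of_mem _ (Finset.mem_univ i)) _
  -- localization of odd prime divisors of 2N
  have hloc : ∀ t, t.Prime → t ≠ 2 → t ∣ 2 * N → t = p ∨ ∃ j, t = q j := by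
    intro t ht ht2 htdvd
    rcases (Nat.Prime.dvd_mul ht).mp htdvd with h2 | hNdvd
    · exact absurd ((Nat.prime_dvd_prime_iff_eq ht Nat.prime_two).mp h2) ht2
    rw [hN] at hNdvd
    rcases (Nat.Prime.dvd_mul ht).mp hNdvd with hpp | hqq
    · exact Or.inl ((Nat.prime_dvd_prime_iff_eq ht hp).mp (ht.dvd_of_dvd_pow hpp))
    · obtain ⟨j, _, hj⟩ := (Prime.dvd_finset_prod_iff ht.prime _).mp hqq
      exact Or.inr ⟨j, (Nat.prime_dvd_prime_iff_eq ht (hq j)).mp (ht.dvd_of_dvd_pow hj)⟩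
  have hcard : S.card = (Finset.univ.filter fun i => q i ≡ 1 [MOD ℓ]).card := by
    rw [hSdef]
    exact Finset.card_image_of_injective _ hinj
  constructor
  · -- lower bound
    rw [hcard]
    by_contra hlow
    have hempty : ∀ j, ¬ (q j ≡ 1 [MOD ℓ]) := by
      intro j hj
      have : j ∈ Finset.univ.filter fun i => q i ≡ 1 [MOD ℓ] :=
        Finset.mem_filter.mpr ⟨Finset.mem_univ j, hj⟩
      have := Finset.card_pos.mpr ⟨j, this⟩
      omega
    -- s = 0 is impossible
    rcases Nat.eq_zero_or_pos s with hs0 | hs1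
    · subst hs0
      haveI : Fact p.Prime := ⟨hp⟩
      have hNp : N = p ^ α := by rw [hN]; simp
      have heq : geo p (α + 1) = 2 * p ^ α := by
        have h := hmain
        simp only [Finset.univ_eq_empty, Finset.prod_empty, mul_one] at h
        rw [h, hNp]
      have h1 : ((geo p (α + 1) : ℕ) : ZMod p) = 1 := by
        rw [geo_cast, ZMod.natCast_self, Finset.sum_range_succ']
        simp
      have h2 : ((2 * p ^ α : ℕ) : ZMod p) = 0 := by
        push_cast
        rw [ZMod.natCast_self, zero_pow (by omega : α ≠ 0)]
        ring
      rw [heq, h2] at h1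
      exact one_ne_zero h1.symm
    -- now s ≥ 1
    obtain ⟨i0⟩ : Nonempty (Fin s) := ⟨⟨0, hs1⟩⟩
    have hl2 : ℓ ≠ 2 := by
      intro h2
      have hdl : ℓ ∣ 2 * β i0 + 1 := dvd_trans (dvd_pow_self ℓ (by omega : k ≠ 0)) (hdvd i0)
      rw [h2] at hdl
      omega
    have hlodd : Odd ℓ := hℓ.odd_of_ne_two hl2
    have hl3 : 3 ≤ ℓ := by
      have := hℓ.two_le
      rcases Nat.lt_or_ge ℓ 3 with h | h
      · interval_cases ℓ <;> simp_all
      · exact h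
    haveI factp : Fact p.Prime := ⟨hp⟩
    haveI factl : Fact ℓ.Prime := ⟨hℓ⟩
    have hq3 : ∀ i, 3 ≤ q i := by
      intro i
      have h2 := (hq i).two_le
      have ho := Nat.odd_iff.mp (hqodd i)
      omega
    have hp3 : 3 ≤ p := by
      have h2 := hp.two_le
      have ho := Nat.odd_iff.mp hpodd
      omega
    have hldvd : ∀ i, ℓ ∣ 2 * β i + 1 := fun i =>
      dvd_trans (dvd_pow_self ℓ (by omega : k ≠ 0)) (hdvd i)
    have hgdvd2N : ∀ i, geo (q i) ℓ ∣ 2 * N := fun i =>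
      (geo_dvd_geo _ (hldvd i)).trans (hσidvd i)
    -- every prime divisor of geo (q i) ℓ equals p
    have hC1 : ∀ i t, t.Prime → t ∣ geo (q i) ℓ → t = p := by
      intro i t ht htd
      have htodd : t ≠ 2 := by
        intro h2
        have hoddg : Odd (geo (q i) ℓ) := geo_odd (hqodd i) hlodd
        rw [h2] at htd
        rw [Nat.odd_iff] at hoddg
        omega
      have ht2N : t ∣ 2 * N := htd.trans (hgdvd2N i)
      have hpow : ((q i : ZMod t)) ^ ℓ = 1 := pow_eq_one_of_dvd_geo htd
      by_cases hx1 : (q i : ZMod t) = 1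
      · have htl : t = ℓ := (Nat.prime_dvd_prime_iff_eq ht hℓ).mp (dvd_len_of_dvd_geo hx1 htd)
        subst htl
        exact absurd ((ZMod.natCast_eq_natCast_iff _ _ _).mp (by simpa using hx1)) (hempty i)
      · haveI := Fact.mk ht
        have hyne0 : (q i : ZMod t) ≠ 0 := by
          intro h0
          rw [h0, zero_pow hℓ.ne_zero] at hpow
          exact zero_ne_one hpow
        have hord : orderOf (q i : ZMod t) = ℓ := by
          rcases (Nat.dvd_prime hℓ).mp (orderOf_dvd_iff_pow_eq_one.mpr hpow) with h1 | h1
          · exact absurd (orderOf_eq_one_iff.mp h1) hx1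
          · exact h1
        have hldvd' : ℓ ∣ t - 1 := hord ▸ ZMod.orderOf_dvd_card_sub_one hyne0
        have htmod : t ≡ 1 [MOD ℓ] := ((Nat.modEq_iff_dvd' ht.one_lt.le).mpr hldvd').symm
        rcases hloc t ht htodd ht2N with rfl | ⟨j, rfl⟩
        · rfl
        · exact absurd htmod (hempty j)
    have hgne1 : ∀ i, 1 < geo (q i) ℓ := by
      intro i
      have h1 : q i ≤ (q i) ^ (ℓ - 1) := Nat.le_self_pow (by omega) _
      have h2 := pow_le_geo (n := ℓ) (x := q i) (by omega)
      have := hq3 i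
      omega
    have hpdvdg : ∀ i, p ∣ geo (q i) ℓ := by
      intro i
      have hmf : (geo (q i) ℓ).minFac.Prime := Nat.minFac_prime (by have := hgne1 i; omega)
      have := hC1 i _ hmf (Nat.minFac_dvd _)
      rw [← this]
      exact Nat.minFac_dvd _
    have hqlp : ∀ i, (q i : ZMod p) ^ ℓ = 1 := fun i => pow_eq_one_of_dvd_geo (hpdvdg i)
    have hqp_ne1 : ∀ i, (q i : ZMod p) ≠ 1 := by
      intro i h1
      have hpl : p = ℓ := (Nat.prime_dvd_prime_iff_eq hp hℓ).mp (dvd_len_of_dvd_geo h1 (hpdvdg i))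
      subst hpl
      exact absurd ((ZMod.natCast_eq_natCast_iff _ _ _).mp (by simpa using h1)) (hempty i)
    have hqp_ne0 : ∀ i, (q i : ZMod p) ≠ 0 := by
      intro i h0
      have := hqlp i
      rw [h0, zero_pow hℓ.ne_zero] at this
      exact zero_ne_one this
    have hpmodl : p ≡ 1 [MOD ℓ] := by
      have hord : orderOf (q i0 : ZMod p) = ℓ := by
        rcases (Nat.dvd_prime hℓ).mp (orderOf_dvd_iff_pow_eq_one.mpr (hqlp i0)) with h1 | h1
        · exact absurd (orderOf_eq_one_iff.mp h1) (hqp_ne1 i0)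
        · exact h1
      have hldvd' : ℓ ∣ p - 1 := hord ▸ ZMod.orderOf_dvd_card_sub_one (hqp_ne0 i0)
      exact ((Nat.modEq_iff_dvd' hp.one_lt.le).mpr hldvd').symm
    have hpnel : p ≠ ℓ := by
      intro h
      rw [h] at hpmodl
      unfold Nat.ModEq at hpmodl
      rw [Nat.mod_self, Nat.mod_eq_of_lt (by omega : 1 < ℓ)] at hpmodl
      omega
    have hpndvdq : ∀ i (m : ℕ), ¬ p ∣ (q i) ^ m := by
      intro i m hcon
      exact hpq i ((Nat.prime_dvd_prime_iff_eq hp (hq i)).mp (hp.dvd_of_dvd_pow hcon))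
    -- All exponents are equal to ℓ
    have hexp : ∀ i, 2 * β i + 1 = ℓ := by
      intro i
      by_contra hne
      obtain ⟨M, hM⟩ := hldvd i
      have hM2 : 2 ≤ M := by
        rcases Nat.lt_or_ge M 2 with h | h
        · interval_cases M <;> omega
        · exact h
      have hModd : Odd M := by
        rcases Nat.even_or_odd M with he | ho
        · exfalso
          obtain ⟨m2, hm2⟩ := he
          have h2e : 2 * β i + 1 = 2 * (ℓ * m2) := by rw [hM, hm2]; ring
          omega
        · exact ho
      set r := M.minFac with hrdef
      have hr : r.Prime := Nat.minFac_prime (by omega)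
      have hrM : r ∣ M := Nat.minFac_dvd M
      have hrodd : r ≠ 2 := by
        intro h2
        have : (2 : ℕ) ∣ M := h2 ▸ hrM
        rw [Nat.odd_iff] at hModd
        omega
      have hr3 : 3 ≤ r := by
        have := hr.two_le
        omega
      by_cases hrl : r = ℓ
      · -- case r = ℓ : consider geo ((q i)^ℓ) ℓ
        have hll : ℓ * ℓ ∣ 2 * β i + 1 := by
          rw [hM]
          exact mul_dvd_mul_left ℓ (hrl ▸ hrM)
        have hDdvd : geo ((q i) ^ ℓ) ℓ ∣ 2 * N := by
          have h1 : geo ((q i) ^ ℓ) ℓ ∣ geo (q i) (ℓ * ℓ) := by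
            rw [geo_factor]
            exact dvd_mul_left _ _
          exact (h1.trans (geo_dvd_geo _ hll)).trans (hσidvd i)
        have hql2 : 2 ≤ (q i) ^ ℓ :=
          le_trans (by have := hq3 i; omega) (Nat.le_self_pow (by omega) _)
        have hD1 : 1 < geo ((q i) ^ ℓ) ℓ := by
          have h1 : (q i) ^ ℓ ≤ ((q i) ^ ℓ) ^ (ℓ - 1) := Nat.le_self_pow (by omega) _
          have h2 := pow_le_geo (n := ℓ) (x := (q i) ^ ℓ) (by omega)
          omega
        obtain ⟨t, ht, htd⟩ : ∃ t, t.Prime ∧ t ∣ geo ((q i) ^ ℓ) ℓ :=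
          ⟨_, Nat.minFac_prime (by omega), Nat.minFac_dvd _⟩
        have htodd : t ≠ 2 := by
          intro h2
          have hoddg : Odd (geo ((q i) ^ ℓ) ℓ) := geo_odd (Odd.pow (hqodd i)) hlodd
          rw [Nat.odd_iff] at hoddg
          rw [h2] at htd
          omega
        have hpow : (((q i) ^ ℓ : ℕ) : ZMod t) ^ ℓ = 1 := pow_eq_one_of_dvd_geo htd
        by_cases hy1 : (((q i) ^ ℓ : ℕ) : ZMod t) = 1
        · have htl : t = ℓ := (Nat.prime_dvd_prime_iff_eq ht hℓ).mp (dvd_len_of_dvd_geo hy1 htd)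
          rw [htl] at hy1
          push_cast at hy1
          rw [ZMod.pow_card] at hy1
          exact absurd ((ZMod.natCast_eq_natCast_iff _ _ _).mp (by simpa using hy1)) (hempty i)
        · haveI := Fact.mk ht
          have hyne0 : (((q i) ^ ℓ : ℕ) : ZMod t) ≠ 0 := by
            intro h0
            rw [h0, zero_pow hℓ.ne_zero] at hpow
            exact zero_ne_one hpow
          have hord : orderOf (((q i) ^ ℓ : ℕ) : ZMod t) = ℓ := by
            rcases (Nat.dvd_prime hℓ).mp (orderOf_dvd_iff_pow_eq_one.mpr hpow) with h1 | h1
            · exact absurd (orderOf_eq_one_iff.mp h1) hy1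
            · exact h1
          have hldvd' : ℓ ∣ t - 1 := hord ▸ ZMod.orderOf_dvd_card_sub_one hyne0
          have htmod : t ≡ 1 [MOD ℓ] := ((Nat.modEq_iff_dvd' ht.one_lt.le).mpr hldvd').symm
          have ht2N : t ∣ 2 * N := htd.trans hDdvd
          rcases hloc t ht htodd ht2N with rfl | ⟨j, rfl⟩
          · apply hy1
            push_cast
            exact hqlp i
          · exact absurd htmod (hempty j)
      · -- case r ≠ ℓ
        have hlr : r * ℓ ∣ 2 * β i + 1 := by
          rw [hM, mul_comm r ℓ]
          exact mul_dvd_mul_left ℓ hrM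
        have hBdvd : geo ((q i) ^ r) ℓ ∣ 2 * N := by
          have h1 : geo ((q i) ^ r) ℓ ∣ geo (q i) (r * ℓ) := by
            rw [geo_factor]
            exact dvd_mul_left _ _
          exact (h1.trans (geo_dvd_geo _ hlr)).trans (hσidvd i)
        have hqr2 : 2 ≤ (q i) ^ r :=
          le_trans (by have := hq3 i; omega) (Nat.le_self_pow (by omega) _)
        have hB1 : 1 < geo ((q i) ^ r) ℓ := by
          have h1 : (q i) ^ r ≤ ((q i) ^ r) ^ (ℓ - 1) := Nat.le_self_pow (by omega) _
          have h2 := pow_le_geo (n := ℓ) (x := (q i) ^ r) (by omega)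
          omega
        have hBodd : Odd (geo ((q i) ^ r) ℓ) := geo_odd (Odd.pow (hqodd i)) hlodd
        have hBfac : ∀ t, t.Prime → t ∣ geo ((q i) ^ r) ℓ → t = ℓ ∨ t = p := by
          intro t ht htd
          have htodd : t ≠ 2 := by
            intro h2
            rw [Nat.odd_iff] at hBodd
            rw [h2] at htd
            omega
          have hpow : (((q i) ^ r : ℕ) : ZMod t) ^ ℓ = 1 := pow_eq_one_of_dvd_geo htd
          by_cases hy1 : (((q i) ^ r : ℕ) : ZMod t) = 1
          · exact Or.inl ((Nat.prime_dvd_prime_iff_eq ht hℓ).mp (dvd_len_of_dvd_geo hy1 htd))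
          · right
            haveI := Fact.mk ht
            have hyne0 : (((q i) ^ r : ℕ) : ZMod t) ≠ 0 := by
              intro h0
              rw [h0, zero_pow hℓ.ne_zero] at hpow
              exact zero_ne_one hpow
            have hord : orderOf (((q i) ^ r : ℕ) : ZMod t) = ℓ := by
              rcases (Nat.dvd_prime hℓ).mp (orderOf_dvd_iff_pow_eq_one.mpr hpow) with h1 | h1
              · exact absurd (orderOf_eq_one_iff.mp h1) hy1
              · exact h1
            have hldvd' : ℓ ∣ t - 1 := hord ▸ ZMod.orderOf_dvd_card_sub_one hyne0
            have htmod : t ≡ 1 [MOD ℓ] := ((Nat.modEq_iff_dvd' ht.one_lt.le).mpr hldvd').symm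
            have ht2N : t ∣ 2 * N := htd.trans hBdvd
            rcases hloc t ht htodd ht2N with rfl | ⟨j, rfl⟩
            · rfl
            · exact absurd htmod (hempty j)
        have hvl : padicValNat ℓ (geo ((q i) ^ r) ℓ) ≤ 1 := by
          by_cases hlB : ℓ ∣ geo ((q i) ^ r) ℓ
          · have hpow := pow_eq_one_of_dvd_geo hlB
            have hy : (((q i) ^ r : ℕ) : ZMod ℓ) = 1 := by
              calc (((q i) ^ r : ℕ) : ZMod ℓ) = (((q i) ^ r : ℕ) : ZMod ℓ) ^ ℓ :=
                (ZMod.pow_card _).symm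
              _ = 1 := hpow
            have hmodeq : (q i) ^ r ≡ 1 [MOD ℓ] :=
              (ZMod.natCast_eq_natCast_iff _ _ _).mp (by simpa using hy)
            have hdvd1 : ℓ ∣ (q i) ^ r - 1 := (Nat.modEq_iff_dvd' (by omega)).mp hmodeq.symm
            rw [geo_val hℓ hlodd hqr2 hdvd1 (by omega : ℓ ≠ 0), padicValNat_self]
          · rw [padicValNat.eq_zero_of_not_dvd hlB]
            omega
        have hpdvd_ql : p ∣ (q i) ^ ℓ - 1 :=
          (hpdvdg i).trans (geo_dvd_pow_sub_one (by have := hq3 i; omega) ℓ)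
        have hql2 : 2 ≤ (q i) ^ ℓ :=
          le_trans (by have := hq3 i; omega) (Nat.le_self_pow (by omega) _)
        have hvp : padicValNat p (geo ((q i) ^ r) ℓ) ≤
            padicValNat p ((q i) ^ ℓ - 1) + padicValNat p r := by
          have h1 : geo ((q i) ^ r) ℓ ∣ ((q i) ^ ℓ) ^ r - 1 := by
            have h2 : geo ((q i) ^ r) ℓ ∣ ((q i) ^ r) ^ ℓ - 1 :=
              geo_dvd_pow_sub_one (by omega) ℓ
            rw [← pow_mul, mul_comm r ℓ, pow_mul] at h2
            exact h2
          have h3 : ((q i) ^ ℓ) ^ r - 1 ≠ 0 := by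
            have : 2 ≤ ((q i) ^ ℓ) ^ r := le_trans hql2 (Nat.le_self_pow (by omega) _)
            omega
          have h4 := val_le_of_dvd (t := p) h1 h3
          have h5 : padicValNat p (((q i) ^ ℓ) ^ r - 1) =
              padicValNat p ((q i) ^ ℓ - 1) + padicValNat p r := by
            have h6 := padicValNat.pow_sub_pow (p := p) hpodd (by omega : 1 < (q i) ^ ℓ)
              (by simpa using hpdvd_ql) (hpndvdq i ℓ) (by omega : r ≠ 0)
            simpa using h6
          omega
        have hBle : geo ((q i) ^ r) ℓ ≤ ℓ * (((q i) ^ ℓ - 1) * r) := by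
          have h1 := dvd_pp2 (by omega : geo ((q i) ^ r) ℓ ≠ 0) hℓ hp hBfac
          have h2 : geo ((q i) ^ r) ℓ ≤
              ℓ ^ padicValNat ℓ (geo ((q i) ^ r) ℓ) * p ^ padicValNat p (geo ((q i) ^ r) ℓ) :=
            Nat.le_of_dvd (by positivity) h1
          have h3 : ℓ ^ padicValNat ℓ (geo ((q i) ^ r) ℓ) ≤ ℓ := by
            calc ℓ ^ padicValNat ℓ (geo ((q i) ^ r) ℓ) ≤ ℓ ^ 1 :=
              Nat.pow_le_pow_right (by omega) hvl
            _ = ℓ := pow_one ℓ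
          have h4 : p ^ padicValNat p (geo ((q i) ^ r) ℓ) ≤ ((q i) ^ ℓ - 1) * r := by
            calc p ^ padicValNat p (geo ((q i) ^ r) ℓ)
                ≤ p ^ (padicValNat p ((q i) ^ ℓ - 1) + padicValNat p r) :=
              Nat.pow_le_pow_right (by omega) hvp
            _ = p ^ padicValNat p ((q i) ^ ℓ - 1) * p ^ padicValNat p r := pow_add p _ _
            _ ≤ ((q i) ^ ℓ - 1) * r := Nat.mul_le_mul
                (Nat.le_of_dvd (by omega) pow_padicValNat_dvd)
                (Nat.le_of_dvd (by omega) pow_padicValNat_dvd)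
          calc geo ((q i) ^ r) ℓ ≤ _ := h2
          _ ≤ ℓ * (((q i) ^ ℓ - 1) * r) := Nat.mul_le_mul h3 h4
        have hBge : ((q i) ^ r) ^ (ℓ - 1) ≤ geo ((q i) ^ r) ℓ := pow_le_geo (by omega)
        have harith : ((q i) ^ r) ^ (ℓ - 1) = (q i) ^ ℓ * (q i) ^ ((ℓ - 1) * (r - 1) - 1) := by
          rw [← pow_mul, ← pow_add]
          congr 1
          obtain ⟨a, ha⟩ : ∃ a, ℓ = a + 3 := ⟨ℓ - 3, by omega⟩
          obtain ⟨b, hb⟩ : ∃ b, r = b + 3 := ⟨r - 3, by omega⟩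
          rw [ha, hb]
          have e1 : a + 3 - 1 = a + 2 := by omega
          have e2 : b + 3 - 1 = b + 2 := by omega
          rw [e1, e2]
          have h1 : (a + 2) * (b + 2) = a * b + 2 * a + 2 * b + 4 := by ring
          have h2 : (b + 3) * (a + 2) = a * b + 3 * a + 2 * b + 6 := by ring
          rw [h1, h2]
          generalize a * b = c
          omega
        have hlt : ℓ * r < (q i) ^ ((ℓ - 1) * (r - 1) - 1) :=
          lt_of_lt_of_le (ineq_lr hl3 hr3) (Nat.pow_le_pow_left (hq3 i) _)
        have hcontr : geo ((q i) ^ r) ℓ < geo ((q i) ^ r) ℓ := by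
          calc geo ((q i) ^ r) ℓ ≤ ℓ * (((q i) ^ ℓ - 1) * r) := hBle
          _ ≤ (ℓ * r) * (q i) ^ ℓ := by
              have h7 : ((q i) ^ ℓ - 1) ≤ (q i) ^ ℓ := by omega
              calc ℓ * (((q i) ^ ℓ - 1) * r) ≤ ℓ * ((q i) ^ ℓ * r) :=
                Nat.mul_le_mul_left _ (Nat.mul_le_mul_right _ h7)
              _ = (ℓ * r) * (q i) ^ ℓ := by ring
          _ < (q i) ^ ((ℓ - 1) * (r - 1) - 1) * (q i) ^ ℓ := by
              have hpos : 0 < (q i) ^ ℓ := Nat.pow_pos (by have := hq3 i; omega)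
              exact (Nat.mul_lt_mul_right hpos).mpr hlt
          _ = ((q i) ^ r) ^ (ℓ - 1) := by rw [harith]; ring
          _ ≤ geo ((q i) ^ r) ℓ := hBge
        omega
    -- Final configuration: all exponents equal ℓ
    have hgeo_ne : ∀ i, geo (q i) ℓ ≠ 0 := fun i => by have := hgne1 i; omega
    have hgpp : ∀ i, geo (q i) ℓ = p ^ (padicValNat p (geo (q i) ℓ)) := fun i =>
      eq_pp1 (hgeo_ne i) hp (hC1 i)
    set Q := ∏ i, (q i) ^ (ℓ - 1) with hQdef
    set E := ∑ i, padicValNat p (geo (q i) ℓ) with hEdef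
    have hprodgeo : ∏ i, geo (q i) (2 * β i + 1) = p ^ E := by
      rw [hEdef, ← Finset.prod_pow_eq_pow_sum]
      refine Finset.prod_congr rfl fun i _ => ?_
      rw [hexp i]
      exact hgpp i
    have hNQ : N = p ^ α * Q := by
      rw [hN, hQdef]
      congr 1
      exact Finset.prod_congr rfl fun i _ => by
        rw [show 2 * β i = ℓ - 1 from by have := hexp i; omega]
    have hQpos : 0 < Q := Finset.prod_pos fun i _ =>
      Nat.pow_pos (by have := hq3 i; omega)
    have hkey : geo p (α + 1) * p ^ E = 2 * Q * p ^ α := by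
      have h1 := hmain
      rw [hprodgeo, hNQ] at h1
      rw [h1]; ring
    have hpgeo1 : ((geo p (α + 1) : ℕ) : ZMod p) = 1 := by
      rw [geo_cast, ZMod.natCast_self, Finset.sum_range_succ']
      simp
    have hpndgeo : ¬ p ∣ geo p (α + 1) := by
      intro hc
      have h2 := (ZMod.natCast_eq_zero_iff _ _).mpr hc
      rw [hpgeo1] at h2
      exact one_ne_zero h2
    have hpndQ : ¬ p ∣ 2 * Q := by
      intro hc
      rcases (Nat.Prime.dvd_mul hp).mp hc with h2 | hQ'
      · have := Nat.le_of_dvd (by norm_num) h2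
        omega
      · obtain ⟨j, _, hj⟩ := (Prime.dvd_finset_prod_iff hp.prime _).mp hQ'
        exact hpndvdq j _ hj
    have hEα : E = α := by
      have h1 : padicValNat p (geo p (α + 1) * p ^ E) = E := by
        rw [padicValNat.mul (geo_ne_zero (by omega)) (pow_ne_zero _ hp.pos.ne'),
          padicValNat.eq_zero_of_not_dvd hpndgeo, padicValNat.prime_pow]
        omega
      have h2 : padicValNat p (2 * Q * p ^ α) = α := by
        rw [padicValNat.mul (by omega : 2 * Q ≠ 0) (pow_ne_zero _ hp.pos.ne'),
          padicValNat.eq_zero_of_not_dvd hpndQ, padicValNat.prime_pow]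
        omega
      rw [hkey] at h1
      omega
    have hσQA : geo p (α + 1) = 2 * Q := by
      have h1 := hkey
      rw [hEα] at h1
      exact Nat.eq_of_mul_eq_mul_right (Nat.pow_pos hp.pos) h1
    -- work modulo p
    have hQp : ((2 * Q : ℕ) : ZMod p) = 1 := by rw [← hσQA]; exact hpgeo1
    have hQcast : ((Q : ℕ) : ZMod p) = (∏ i, ((q i : ℕ) : ZMod p)) ^ (ℓ - 1) := by
      rw [hQdef]
      push_cast
      rw [← Finset.prod_pow]
    have hul : (∏ i, ((q i : ℕ) : ZMod p)) ^ ℓ = 1 := by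
      rw [← Finset.prod_pow]
      calc ∏ i, ((q i : ℕ) : ZMod p) ^ ℓ = ∏ _i : Fin s, (1 : ZMod p) :=
        Finset.prod_congr rfl fun i _ => hqlp i
      _ = 1 := Finset.prod_const_one
    have h2u : (2 : ZMod p) * (∏ i, ((q i : ℕ) : ZMod p)) ^ (ℓ - 1) = 1 := by
      have h3 := hQp
      push_cast at h3
      rw [hQcast] at h3
      exact h3
    have hu2 : (∏ i, ((q i : ℕ) : ZMod p)) = 2 := by
      have h3 : (∏ i, ((q i : ℕ) : ZMod p)) *
          ((2 : ZMod p) * (∏ i, ((q i : ℕ) : ZMod p)) ^ (ℓ - 1)) = (∏ i, ((q i : ℕ) : ZMod p)) * 1 := by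
        rw [h2u]
      have hxx : (∏ i, ((q i : ℕ) : ZMod p)) * (∏ i, ((q i : ℕ) : ZMod p)) ^ (ℓ - 1)
          = (∏ i, ((q i : ℕ) : ZMod p)) ^ ℓ := by
        rw [← pow_succ']
        congr 1
        omega
      have h4 : (∏ i, ((q i : ℕ) : ZMod p)) *
          ((2 : ZMod p) * (∏ i, ((q i : ℕ) : ZMod p)) ^ (ℓ - 1)) =
          (2 : ZMod p) * (∏ i, ((q i : ℕ) : ZMod p)) ^ ℓ := by
        rw [← hxx]
        ring
      rw [h4, hul, mul_one, mul_one] at h3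
      rw [← h3]
    have h2l : p ∣ 2 ^ ℓ - 1 := by
      rw [dvd_pow_sub_one_iff (by norm_num)]
      have h5 : ((2 : ℕ) : ZMod p) ^ ℓ = 1 := by
        have : ((2 : ℕ) : ZMod p) = (2 : ZMod p) := by push_cast; rfl
        rw [this, ← hu2, hul]
      exact h5
    by_cases hl30 : ℓ = 3
    · rw [hl30] at h2l
      norm_num at h2l
      have hp7 : p = 7 := (Nat.prime_dvd_prime_iff_eq hp (by norm_num)).mp h2l
      omega
    · have hl5 : 5 ≤ ℓ := by
        have h4 : ℓ ≠ 4 := fun h => by rw [h] at hℓ; norm_num at hℓ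
        omega
      have hp5 : 5 ≤ p := by omega
      -- for each j, q j ^ (ℓ - 2) divides α + 1
      have hvalj : ∀ j, (q j) ^ (ℓ - 2) ∣ α + 1 := by
        intro j
        haveI factqj : Fact (q j).Prime := ⟨hq j⟩
        have hqj3 := hq3 j
        have hqjodd : Odd (q j) := hqodd j
        have hv2Q : padicValNat (q j) (2 * Q) = ℓ - 1 := by
          rw [padicValNat.mul (by norm_num) (by omega : Q ≠ 0)]
          have hv2 : padicValNat (q j) 2 = 0 := padicValNat.eq_zero_of_not_dvd (by
            intro hc
            have := Nat.le_of_dvd (by norm_num) hc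
            omega)
          have hvQ : padicValNat (q j) Q = ℓ - 1 := by
            rw [hQdef, ← Finset.mul_prod_erase _ _ (Finset.mem_univ j),
              padicValNat.mul (pow_ne_zero _ (by omega : q j ≠ 0))
                (Finset.prod_ne_zero_iff.mpr fun i _ => pow_ne_zero _ (by have := hq3 i; omega)),
              padicValNat.prime_pow]
            have hrest : padicValNat (q j) (∏ i ∈ Finset.univ.erase j, (q i) ^ (ℓ - 1)) = 0 :=
              padicValNat.eq_zero_of_not_dvd (by
                intro hc
                obtain ⟨i, hi, hdvd'⟩ := (Prime.dvd_finset_prod_iff (hq j).prime _).mp hc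
                have heqq : q j = q i :=
                  (Nat.prime_dvd_prime_iff_eq (hq j) (hq i)).mp ((hq j).dvd_of_dvd_pow hdvd')
                exact (Finset.mem_erase.mp hi).1 (hinj heqq).symm)
            omega
          omega
        have hej1 : 1 ≤ padicValNat p (geo (q j) ℓ) := by
          by_contra h0
          have h1 := hgpp j
          have h2 := hgne1 j
          rw [show padicValNat p (geo (q j) ℓ) = 0 from by omega] at h1
          rw [pow_zero] at h1
          omega
        have hsub : geo (q j) ℓ - 1 = q j * geo (q j) (ℓ - 1) := by
          have h1 := geo_succ' (q j) (ℓ - 1)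
          rw [show (ℓ - 1) + 1 = ℓ from by omega] at h1
          omega
        have hgeo_l1 : ¬ q j ∣ geo (q j) (ℓ - 1) := by
          intro hc
          have h7 := geo_succ' (q j) (ℓ - 2)
          rw [show (ℓ - 2) + 1 = ℓ - 1 from by omega] at h7
          have h8 : q j ∣ q j * geo (q j) (ℓ - 2) := Dvd.intro _ rfl
          have h9 := Nat.dvd_sub hc h8
          rw [h7] at h9
          rw [show 1 + q j * geo (q j) (ℓ - 2) - q j * geo (q j) (ℓ - 2) = 1 from by omega] at h9
          have := Nat.le_of_dvd one_pos h9
          omega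
        have hv_pe : padicValNat (q j) (geo (q j) ℓ - 1) = 1 := by
          rw [hsub, padicValNat.mul (by omega : q j ≠ 0) (geo_ne_zero (by omega)),
            padicValNat_self, padicValNat.eq_zero_of_not_dvd hgeo_l1]
        have hpne0j : ((p : ℕ) : ZMod (q j)) ≠ 0 := by
          intro h0
          have h1 := (ZMod.natCast_eq_zero_iff _ _).mp h0
          exact hpq j ((Nat.prime_dvd_prime_iff_eq (hq j) hp).mp h1).symm
        have hqj_dvd_pe : q j ∣ p ^ (padicValNat p (geo (q j) ℓ)) - 1 := by
          rw [← hgpp j, hsub]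
          exact Dvd.intro _ rfl
        have hpej1 : ((p : ℕ) : ZMod (q j)) ^ (padicValNat p (geo (q j) ℓ)) = 1 :=
          (dvd_pow_sub_one_iff (by omega)).mp hqj_dvd_pe
        have hd_ej : orderOf ((p : ℕ) : ZMod (q j)) ∣ padicValNat p (geo (q j) ℓ) :=
          orderOf_dvd_iff_pow_eq_one.mpr hpej1
        have hd_qj : orderOf ((p : ℕ) : ZMod (q j)) ∣ q j - 1 :=
          ZMod.orderOf_dvd_card_sub_one hpne0j
        have hdpos : 0 < orderOf ((p : ℕ) : ZMod (q j)) := Nat.pos_of_ne_zero (fun h0 => by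
          rw [h0] at hd_ej
          have := Nat.eq_zero_of_zero_dvd hd_ej
          omega)
        have hqjQ : q j ∣ Q := by
          rw [hQdef]
          exact dvd_trans (dvd_pow_self _ (by omega : ℓ - 1 ≠ 0))
            (Finset.dvd_prod_of_mem _ (Finset.mem_univ j))
        have hqj_geo : q j ∣ geo p (α + 1) := by
          rw [hσQA]
          exact hqjQ.mul_left 2
        have hpα1 : ((p : ℕ) : ZMod (q j)) ^ (α + 1) = 1 :=
          (dvd_pow_sub_one_iff (by omega)).mp
            (hqj_geo.trans (geo_dvd_pow_sub_one (by omega : 1 ≤ p) (α + 1)))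
        have hd_α1 : orderOf ((p : ℕ) : ZMod (q j)) ∣ α + 1 :=
          orderOf_dvd_iff_pow_eq_one.mpr hpα1
        have hvα : ℓ - 2 ≤ padicValNat (q j) (α + 1) := by
          by_cases hd1 : orderOf ((p : ℕ) : ZMod (q j)) = 1
          · have hp1 : ((p : ℕ) : ZMod (q j)) = 1 := orderOf_eq_one_iff.mp hd1
            have hqj_p1 : q j ∣ p - 1 := by
              have h1 := (ZMod.natCast_eq_natCast_iff p 1 (q j)).mp (by simpa using hp1)
              exact (Nat.modEq_iff_dvd' (by omega)).mp h1.symm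
            have hvgeo : padicValNat (q j) (geo p (α + 1)) = padicValNat (q j) (α + 1) :=
              geo_val (hq j) hqjodd (by omega : 2 ≤ p) hqj_p1 (by omega)
            rw [hσQA, hv2Q] at hvgeo
            omega
          · obtain ⟨Md, hMd⟩ := hd_α1
            have hMdpos : Md ≠ 0 := by
              intro h0
              rw [h0, mul_zero] at hMd
              omega
            have hfac2 : geo p (α + 1) = geo p (orderOf ((p : ℕ) : ZMod (q j))) *
                geo (p ^ (orderOf ((p : ℕ) : ZMod (q j)))) Md := by
              rw [← geo_factor, ← hMd]
            have hvej : padicValNat (q j) (p ^ (padicValNat p (geo (q j) ℓ)) - 1) = 1 := by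
              rw [← hgpp j]
              exact hv_pe
            have hv_d : padicValNat (q j) (geo p (orderOf ((p : ℕ) : ZMod (q j)))) ≤ 1 := by
              have h8 : geo p (orderOf ((p : ℕ) : ZMod (q j))) ∣
                  p ^ (orderOf ((p : ℕ) : ZMod (q j))) - 1 :=
                geo_dvd_pow_sub_one (by omega) _
              have h9 : p ^ (orderOf ((p : ℕ) : ZMod (q j))) - 1 ∣
                  p ^ (padicValNat p (geo (q j) ℓ)) - 1 := by
                obtain ⟨c, hc⟩ := hd_ej
                rw [hc, pow_mul]
                simpa using Nat.sub_dvd_pow_sub_pow (p ^ (orderOf ((p : ℕ) : ZMod (q j)))) 1 c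
              have hne : p ^ (padicValNat p (geo (q j) ℓ)) - 1 ≠ 0 := by
                have h10 : p ≤ p ^ (padicValNat p (geo (q j) ℓ)) :=
                  Nat.le_self_pow (by omega) _
                omega
              have h10 := val_le_of_dvd (t := q j) (h8.trans h9) hne
              omega
            have hqj_pd : q j ∣ p ^ (orderOf ((p : ℕ) : ZMod (q j))) - 1 := by
              rw [dvd_pow_sub_one_iff (by omega : 1 ≤ p)]
              exact pow_orderOf_eq_one _
            have hv_M : padicValNat (q j) (geo (p ^ (orderOf ((p : ℕ) : ZMod (q j)))) Md) =
                padicValNat (q j) Md :=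
              geo_val (hq j) hqjodd
                (le_trans (by omega : 2 ≤ p) (Nat.le_self_pow (by omega) _)) hqj_pd hMdpos
            have hvMα : padicValNat (q j) Md = padicValNat (q j) (α + 1) := by
              rw [hMd, padicValNat.mul (by omega : orderOf ((p : ℕ) : ZMod (q j)) ≠ 0) hMdpos]
              have hnd' : padicValNat (q j) (orderOf ((p : ℕ) : ZMod (q j))) = 0 :=
                padicValNat.eq_zero_of_not_dvd (by
                  intro hc
                  have h11 := Nat.le_of_dvd (by omega) hc
                  have h12 : orderOf ((p : ℕ) : ZMod (q j)) ≤ q j - 1 :=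
                    Nat.le_of_dvd (by omega) hd_qj
                  omega)
              omega
            have hvtot : padicValNat (q j) (geo p (α + 1)) =
                padicValNat (q j) (geo p (orderOf ((p : ℕ) : ZMod (q j)))) +
                padicValNat (q j) (geo (p ^ (orderOf ((p : ℕ) : ZMod (q j)))) Md) := by
              rw [hfac2, padicValNat.mul (geo_ne_zero (by omega)) (geo_ne_zero (by omega))]
            have hvgeo2Q : padicValNat (q j) (geo p (α + 1)) = ℓ - 1 := by
              rw [hσQA]
              exact hv2Q
            omega
        calc (q j) ^ (ℓ - 2) ∣ (q j) ^ (padicValNat (q j) (α + 1)) := pow_dvd_pow _ hvα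
        _ ∣ α + 1 := pow_padicValNat_dvd
      -- assemble the size contradiction
      have hproddvd : (∏ i, (q i) ^ (ℓ - 2)) ∣ α + 1 :=
        prod_coprime_dvd
          (fun i _ j _ hij => Nat.Coprime.pow _ _
            ((Nat.coprime_primes (hq i) (hq j)).mpr (fun h => hij (hinj h))))
          (fun i _ => hvalj i)
      have hprodle : (∏ i, (q i) ^ (ℓ - 2)) ≤ α + 1 := Nat.le_of_dvd (by omega) hproddvd
      have hPα : p ^ α = ∏ i, geo (q i) ℓ := by
        rw [← hEα, hEdef, ← Finset.prod_pow_eq_pow_sum]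
        exact Finset.prod_congr rfl fun i _ => (hgpp i).symm
      haveI : Nonempty (Fin s) := ⟨i0⟩
      have hprodlt : ∏ i, geo (q i) ℓ < ∏ i, (q i) ^ ℓ :=
        Finset.prod_lt_prod_of_nonempty (fun i _ => by have := hgne1 i; omega)
          (fun i _ => geo_lt_pow (by have := hq3 i; omega) (by omega))
          Finset.univ_nonempty
      have hchain : p ^ (α * (ℓ - 2)) < (α + 1) ^ ℓ := by
        calc p ^ (α * (ℓ - 2)) = (p ^ α) ^ (ℓ - 2) := by rw [← pow_mul]
        _ < (∏ i, (q i) ^ ℓ) ^ (ℓ - 2) :=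
            Nat.pow_lt_pow_left (by rw [hPα]; exact hprodlt) (by omega)
        _ = ((∏ i, q i) ^ (ℓ - 2)) ^ ℓ := by
            rw [Finset.prod_pow, ← pow_mul, ← pow_mul, Nat.mul_comm ℓ (ℓ - 2)]
        _ ≤ (α + 1) ^ ℓ := by
            apply Nat.pow_le_pow_left
            rw [Finset.prod_pow] at hprodle
            exact hprodle
      have hchain2 : (α + 1) ^ ℓ ≤ p ^ (α * (ℓ - 2)) := by
        calc (α + 1) ^ ℓ ≤ 5 ^ (α * (ℓ - 2)) := ineq_final (by omega) hl5
        _ ≤ p ^ (α * (ℓ - 2)) := Nat.pow_le_pow_left hp5 _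
      omega

  · -- upper bound
    rw [hcard]
    by_contra hbig
    have h5 : 5 ≤ (Finset.univ.filter fun i : Fin s => q i ≡ 1 [MOD ℓ]).card := by omega
    obtain ⟨i0, _⟩ := Finset.card_pos.mp
      (show 0 < (Finset.univ.filter fun i : Fin s => q i ≡ 1 [MOD ℓ]).card by omega)
    have hl2 : ℓ ≠ 2 := by
      intro h2
      have hdl : ℓ ∣ 2 * β i0 + 1 := dvd_trans (dvd_pow_self ℓ (by omega : k ≠ 0)) (hdvd i0)
      rw [h2] at hdl
      omega
    have hkdvd : ∀ i ∈ (Finset.univ.filter fun i : Fin s => q i ≡ 1 [MOD ℓ]),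
        ℓ ^ k ∣ geo (q i) (2 * β i + 1) := fun i hi =>
      geo_pow_dvd (Finset.mem_filter.mp hi).2 k (hdvd i)
    have hprod1 : (ℓ ^ k) ^ (Finset.univ.filter fun i : Fin s => q i ≡ 1 [MOD ℓ]).card ∣
        ∏ i ∈ (Finset.univ.filter fun i : Fin s => q i ≡ 1 [MOD ℓ]), geo (q i) (2 * β i + 1) := by
      rw [← Finset.prod_const]
      exact Finset.prod_dvd_prod_of_dvd _ _ hkdvd
    have hprod2 : (∏ i ∈ (Finset.univ.filter fun i : Fin s => q i ≡ 1 [MOD ℓ]),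
        geo (q i) (2 * β i + 1)) ∣ ∏ i, geo (q i) (2 * β i + 1) :=
      Finset.prod_dvd_prod_of_subset _ _ _ (Finset.filter_subset _ _)
    have hprod3 : (∏ i, geo (q i) (2 * β i + 1)) ∣ 2 * N :=
      ⟨geo p (α + 1), by rw [← hmain]; ring⟩
    have h2N : ℓ ^ (5 * k) ∣ 2 * N := by
      refine dvd_trans ?_ (hprod1.trans (hprod2.trans hprod3))
      rw [← pow_mul]
      apply pow_dvd_pow
      calc 5 * k = k * 5 := by ring
        _ ≤ k * (Finset.univ.filter fun i : Fin s => q i ≡ 1 [MOD ℓ]).card :=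
          Nat.mul_le_mul_left k h5
    have hcop2 : Nat.Coprime (ℓ ^ (5 * k)) 2 :=
      Nat.Coprime.pow_left _ ((Nat.coprime_primes hℓ Nat.prime_two).mpr hl2)
    exact hnd (hcop2.dvd_of_dvd_mul_left h2N)
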